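/- Let G be a finite simple graph, let z ≥ 0 be an integer, and let C₁, F₁, …, C_t, F_t be a z-antler-sequence for G. Then there exists a minimum feedback vertex set of G that contains all of C₁ ∪ ⋯ ∪ C_t and no vertex of F₁ ∪ ⋯ ∪ F_t. -/

import Mathlib

variable {V : Type*}

/-- The subgraph of `G` with edges restricted to the vertex set `S`
(kept on the same vertex type; vertices outside `S` become isolated).
Used to model the induced subgraph `G[S]` and vertex deletion `G - X = G[Xᶜ]`. -/
def graphRestrict (G : SimpleGraph V) (S : Set V) : SimpleGraph V where
  Adj u v := G.Adj u v ∧ u ∈ S ∧ v ∈ S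
  symm := ⟨fun _ _ h => ⟨h.1.symm, h.2.2, h.2.1⟩⟩
  loopless := ⟨fun v h => G.loopless.irrefl v h.1⟩

/-- `X` is a feedback vertex set of `G`: deleting `X` leaves an acyclic graph. -/
def IsFVS (G : SimpleGraph V) (X : Set V) : Prop :=
  (graphRestrict G Xᶜ).IsAcyclic

/-- The feedback vertex number of `G`: the minimum size of a feedback vertex set. -/
noncomputable def fvs (G : SimpleGraph V) : ℕ :=
  sInf {n | ∃ X : Set V, IsFVS G X ∧ X.ncard = n}

/-- `X` is a minimum feedback vertex set of `G`. -/
def IsMinFVS (G : SimpleGraph V) (X : Set V) : Prop :=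
  IsFVS G X ∧ ∀ Y : Set V, IsFVS G Y → X.ncard ≤ Y.ncard

/-- `(C, F)` is a feedback vertex cut in `G`: `C` and `F` are disjoint, `G[F]` is a
forest, and every tree of `G[F]` has at most one edge to `V(G) \ (C ∪ F)` (i.e. any two
edges from the same component of `G[F]` to the outside coincide). -/
def IsFVC (G : SimpleGraph V) (C F : Set V) : Prop :=
  Disjoint C F ∧ (graphRestrict G F).IsAcyclic ∧
    ∀ u₁ u₂ w₁ w₂ : V, u₁ ∈ F → u₂ ∈ F →
      (graphRestrict G F).Reachable u₁ u₂ →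
      w₁ ∉ C ∪ F → w₂ ∉ C ∪ F → G.Adj u₁ w₁ → G.Adj u₂ w₂ →
      u₁ = u₂ ∧ w₁ = w₂

/-- `(C, F)` is an antler in `G`: a feedback vertex cut with `|C| ≤ fvs(G[C ∪ F])`. -/
def IsAntler (G : SimpleGraph V) (C F : Set V) : Prop :=
  IsFVC G C F ∧ C.ncard ≤ fvs (graphRestrict G (C ∪ F))

/-- A graph `H` together with a vertex set `C` "has order `z`" if every connected
component `H'` of `H` satisfies `fvs(H') = |C ∩ V(H')| ≤ z`. -/
def HasCertOrder {W : Type*} (H : SimpleGraph W) (C : Set W) (z : ℕ) : Prop :=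
  ∀ v : W,
    fvs (graphRestrict H {u | H.Reachable u v}) = (C ∩ {u | H.Reachable u v}).ncard ∧
    (C ∩ {u | H.Reachable u v}).ncard ≤ z

/-- `H` is a `C`-certificate in `G`: a subgraph of `G` for which `C` is a minimum
feedback vertex set. -/
def IsCCertificate (G : SimpleGraph V) (C : Set V) (H : G.Subgraph) : Prop :=
  C ⊆ H.verts ∧ IsMinFVS H.coe {u : H.verts | (u : V) ∈ C}

/-- `H` is a `C`-certificate of order `z` in `G`. -/
def IsCCertificateOfOrder (G : SimpleGraph V) (C : Set V) (H : G.Subgraph) (z : ℕ) : Prop :=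
  IsCCertificate G C H ∧ HasCertOrder H.coe {u : H.verts | (u : V) ∈ C} z

/-- `(C, F)` is a `z`-antler in `G`: an antler such that `G[C ∪ F]` contains a
`C`-certificate of order `z`. -/
def IsZAntler (G : SimpleGraph V) (z : ℕ) (C F : Set V) : Prop :=
  IsAntler G C F ∧ ∃ H : G.Subgraph, H.verts ⊆ C ∪ F ∧ IsCCertificateOfOrder G C H z

/-- The function `f_r(x) = 2x³ + 3x² - x`. -/
def fr (x : ℕ) : ℕ := 2 * x ^ 3 + 3 * x ^ 2 - x

/-- A feedback vertex cut `(C, F)` is reducible if `|F| > f_r(|C|)`. -/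
def IsReducibleFVC (G : SimpleGraph V) (C F : Set V) : Prop :=
  IsFVC G C F ∧ fr C.ncard < F.ncard

/-- A feedback vertex cut `(C, F)` is simple if `|F| ≤ 2 f_r(|C|)` and either
`G[F]` is connected, or all trees of `G[F]` have a common neighbor `v` and there is a
single-tree feedback vertex cut `(C, F₂)` with `v ∈ F₂ \ F` and `F ⊆ F₂`. -/
def IsSimpleFVC (G : SimpleGraph V) (C F : Set V) : Prop :=
  IsFVC G C F ∧ F.ncard ≤ 2 * fr C.ncard ∧
    ((G.induce F).Connected ∨
      ∃ v : V,
        (∀ u ∈ F, ∃ u' ∈ F, (graphRestrict G F).Reachable u u' ∧ G.Adj u' v) ∧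
        ∃ F₂ : Set V, IsFVC G C F₂ ∧ (G.induce F₂).Connected ∧ v ∈ F₂ \ F ∧ F ⊆ F₂)

/-- `G` contains a `v`-flower of order `k`: `k` cycles whose vertex sets pairwise
intersect exactly in `{v}`. -/
def HasFlower (G : SimpleGraph V) (v : V) (k : ℕ) : Prop :=
  ∃ c : Fin k → G.Walk v v,
    (∀ i, (c i).IsCycle) ∧
    ∀ i j, i ≠ j → {x | x ∈ (c i).support} ∩ {x | x ∈ (c j).support} = {v}

/-- `G` contains `k` pairwise vertex-disjoint cycles. -/
def HasDisjointCycles (G : SimpleGraph V) (k : ℕ) : Prop :=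
  ∃ (b : Fin k → V) (c : ∀ i, G.Walk (b i) (b i)),
    (∀ i, (c i).IsCycle) ∧
    ∀ i j, i ≠ j → Disjoint {x | x ∈ (c i).support} {x | x ∈ (c j).support}

/-- `(C, F)` is a 1-antler in `G` (self-contained definition): `G[F]` is a forest,
every tree of `G[F]` has at most one edge to `V(G) \ (C ∪ F)`, and `G[C ∪ F]`
contains `|C|` pairwise vertex-disjoint cycles. -/
def IsOneAntler (G : SimpleGraph V) (C F : Set V) : Prop :=
  IsFVC G C F ∧ HasDisjointCycles (graphRestrict G (C ∪ F)) C.ncard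

/-- `C 1, F 1, …, C ℓ, F ℓ` is a `z`-antler-sequence for `G`: the sets are pairwise
disjoint and each `(C i, F i)` is a `z`-antler in `G` minus all earlier sets. -/
def IsAntlerSeq (G : SimpleGraph V) (z ℓ : ℕ) (C F : Fin ℓ → Set V) : Prop :=
  (∀ i j, i ≠ j → Disjoint (C i) (C j)) ∧
  (∀ i j, i ≠ j → Disjoint (F i) (F j)) ∧
  (∀ i j, Disjoint (C i) (F j)) ∧
  ∀ i, IsZAntler (graphRestrict G (⋃ j, ⋃ (_ : j < i), (C j ∪ F j))ᶜ) z (C i) (F i)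

/-! ### Auxiliary lemmas -/

open SimpleGraph

lemma isAcyclic_of_le {G H : SimpleGraph V} (hle : G ≤ H) (h : H.IsAcyclic) : G.IsAcyclic :=
  fun _ w hw => h (w.mapLe hle) (hw.mapLe hle)

lemma graphRestrict_univ (G : SimpleGraph V) : graphRestrict G Set.univ = G := by
  ext u v; simp [graphRestrict]

lemma graphRestrict_graphRestrict (G : SimpleGraph V) (A B : Set V) :
    graphRestrict (graphRestrict G A) B = graphRestrict G (A ∩ B) := by
  ext u v
  simp only [graphRestrict, Set.mem_inter_iff]
  tauto

lemma isFVS_univ (G : SimpleGraph V) : IsFVS G Set.univ := by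
  intro v w hw
  cases w with
  | nil => simp at hw
  | cons h p => exact h.2.1 (Set.mem_univ _)

lemma fvs_exists [Fintype V] (G : SimpleGraph V) :
    ∃ X : Set V, IsFVS G X ∧ X.ncard = fvs G :=
  Nat.sInf_mem (s := {n | ∃ X : Set V, IsFVS G X ∧ X.ncard = n})
    ⟨(Set.univ : Set V).ncard, Set.univ, isFVS_univ G, rfl⟩

lemma fvs_le {G : SimpleGraph V} {X : Set V} (h : IsFVS G X) : fvs G ≤ X.ncard :=
  Nat.sInf_le ⟨X, h, rfl⟩

lemma exists_minFVS [Fintype V] (G : SimpleGraph V) : ∃ X : Set V, IsMinFVS G X := by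
  obtain ⟨X, hX, hc⟩ := fvs_exists G
  exact ⟨X, hX, fun Y hY => hc ▸ fvs_le hY⟩

lemma minFVS_ncard [Fintype V] {G : SimpleGraph V} {S : Set V} (h : IsMinFVS G S) :
    S.ncard = fvs G := by
  obtain ⟨X, hX, hXc⟩ := fvs_exists G
  exact le_antisymm (hXc ▸ h.2 X hX) (fvs_le h.1)

lemma isFVS_restrict {G : SimpleGraph V} {S : Set V} (h : IsFVS G S) (A : Set V) :
    IsFVS (graphRestrict G A) (S ∩ A) := by
  refine isAcyclic_of_le (H := graphRestrict G Sᶜ) ?_ h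
  rintro u v ⟨⟨hG, huA, hvA⟩, hu, hv⟩
  exact ⟨hG, fun hs => hu ⟨hs, huA⟩, fun hs => hv ⟨hs, hvA⟩⟩

lemma isFVS_inter {G : SimpleGraph V} {A S : Set V} (h : IsFVS (graphRestrict G A) S) :
    IsFVS (graphRestrict G A) (S ∩ A) := by
  refine isAcyclic_of_le (H := graphRestrict (graphRestrict G A) Sᶜ) ?_ h
  rintro u v ⟨⟨hG, huA, hvA⟩, hu, hv⟩
  exact ⟨⟨hG, huA, hvA⟩, fun hs => hu ⟨hs, huA⟩, fun hs => hv ⟨hs, hvA⟩⟩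

/-- Extraction lemma: a walk in `G'` starting in `F` but not staying in `F` has a dart
leaving `F`, whose tail is reachable from the start within `GF`. -/
lemma exit_dart {G' GF : SimpleGraph V} {F : Set V}
    (hGF : ∀ a b : V, G'.Adj a b → a ∈ F → b ∈ F → GF.Adj a b) :
    ∀ {a b : V} (w : G'.Walk a b), a ∈ F → ¬ (∀ x ∈ w.support, x ∈ F) →
    ∃ u₂ w₂ : V, u₂ ∈ F ∧ w₂ ∉ F ∧ GF.Reachable a u₂ ∧
      ∃ h : G'.Adj u₂ w₂, SimpleGraph.Dart.mk (u₂, w₂) h ∈ w.darts := by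
  intro a b w
  induction w with
  | nil =>
    intro ha hns
    refine absurd ?_ hns
    intro x hx
    rw [Walk.support_nil, List.mem_singleton] at hx
    exact hx ▸ ha
  | @cons a c b h p ih =>
    intro ha hns
    by_cases hc : c ∈ F
    · have hp : ¬ (∀ x ∈ p.support, x ∈ F) := by
        intro hall
        apply hns
        intro x hx
        rw [Walk.support_cons, List.mem_cons] at hx
        rcases hx with rfl | hx
        · exact ha
        · exact hall x hx
      obtain ⟨u₂, w₂, hu₂, hw₂, hr, hadj, hd⟩ := ih hc hp
      exact ⟨u₂, w₂, hu₂, hw₂, (hGF a c h ha hc).reachable.trans hr, hadj,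
        by rw [Walk.darts_cons]; exact List.mem_cons_of_mem _ hd⟩
    · exact ⟨a, c, ha, hc, Reachable.refl a, h,
        by rw [Walk.darts_cons]; exact List.mem_cons_self⟩

/-- Gluing lemma: if `(C, F)` is an FVC in `G` and `X` is an FVS of `G − (C ∪ F)`
contained in `(C ∪ F)ᶜ`, then `C ∪ X` is an FVS of `G`. -/
lemma antler_glue {G : SimpleGraph V} {C F X : Set V}
    (hfvc : IsFVC G C F) (hX : IsFVS (graphRestrict G (C ∪ F)ᶜ) X) :
    IsFVS G (C ∪ X) := by
  classical
  intro v c hc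
  have hGF : ∀ a b : V, (graphRestrict G (C ∪ X)ᶜ).Adj a b → a ∈ F → b ∈ F →
      (graphRestrict G F).Adj a b :=
    fun a b hab haF hbF => ⟨hab.1, haF, hbF⟩
  by_cases hF : ∃ x ∈ c.support, x ∈ F
  · obtain ⟨u, hu, huF⟩ := hF
    have hc' : (c.rotate u hu).IsCycle := hc.rotate hu
    set c' := c.rotate u hu with hc'def
    by_cases hall : ∀ x ∈ c'.support, x ∈ F
    · -- the cycle lies inside F, contradicting that G[F] is a forest
      have hedges : ∀ e ∈ c'.edges, e ∈ (graphRestrict G F).edgeSet := by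
        intro e he
        induction e with
        | h x y =>
          have hadj := c'.adj_of_mem_edges he
          exact hGF x y hadj (hall x (c'.fst_mem_support_of_mem_edges he))
            (hall y (c'.snd_mem_support_of_mem_edges he))
      exact hfvc.2.1 (c'.transfer _ hedges) (hc'.transfer hedges)
    · -- the cycle leaves F: find the exit and entry darts
      obtain ⟨u₂, w₂, hu₂, hw₂, hr₂, hadj₂, hd₂⟩ := exit_dart hGF c' huF hall
      have hallrev : ¬ (∀ x ∈ c'.reverse.support, x ∈ F) := by
        intro hall'
        apply hall
        intro x hx
        exact hall' x (by rw [Walk.support_reverse, List.mem_reverse]; exact hx)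
      obtain ⟨u₁, w₁, hu₁, hw₁, hr₁, hadj₁, hd₁⟩ := exit_dart hGF c'.reverse huF hallrev
      have hd₁' : (SimpleGraph.Dart.mk (u₁, w₁) hadj₁).symm ∈ c'.darts :=
        Walk.mem_darts_reverse.mp hd₁
      -- apply the FVC property
      have hw₁CF : w₁ ∉ C ∪ F := by
        rintro (hC | hF')
        · exact hadj₁.2.2 (Or.inl hC)
        · exact hw₁ hF'
      have hw₂CF : w₂ ∉ C ∪ F := by
        rintro (hC | hF')
        · exact hadj₂.2.2 (Or.inl hC)
        · exact hw₂ hF'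
      obtain ⟨hequ, heqw⟩ := hfvc.2.2 u₁ u₂ w₁ w₂ hu₁ hu₂ (hr₁.symm.trans hr₂)
        hw₁CF hw₂CF hadj₁.1 hadj₂.1
      -- two distinct darts with the same edge contradict the trail property
      have hnodup : c'.edges.Nodup := hc'.isCircuit.isTrail.edges_nodup
      have hinj := List.inj_on_of_nodup_map (f := SimpleGraph.Dart.edge)
        (l := c'.darts) hnodup
      have heq : ((SimpleGraph.Dart.mk (u₁, w₁) hadj₁).symm).edge
          = (SimpleGraph.Dart.mk (u₂, w₂) hadj₂).edge := by
        subst hequ heqw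
        simp [SimpleGraph.Dart.edge, Sym2.eq_swap]
      have := hinj hd₁' hd₂ heq
      have hfst : w₁ = u₂ := congrArg (fun d => d.toProd.1) this
      subst hfst
      exact hw₁ hu₂
  · -- the cycle avoids F entirely, contradicting that X is an FVS of G − (C ∪ F)
    push_neg at hF
    have hedges : ∀ e ∈ c.edges,
        e ∈ (graphRestrict (graphRestrict G (C ∪ F)ᶜ) Xᶜ).edgeSet := by
      intro e he
      induction e with
      | h x y =>
        have hadj := c.adj_of_mem_edges he
        have hx := c.fst_mem_support_of_mem_edges he
        have hy := c.snd_mem_support_of_mem_edges he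
        have hxCF : x ∈ (C ∪ F)ᶜ := by
          rintro (hC | hF')
          · exact hadj.2.1 (Or.inl hC)
          · exact hF x hx hF'
        have hyCF : y ∈ (C ∪ F)ᶜ := by
          rintro (hC | hF')
          · exact hadj.2.2 (Or.inl hC)
          · exact hF y hy hF'
        exact ⟨⟨hadj.1, hxCF, hyCF⟩,
          fun hxX => hadj.2.1 (Or.inr hxX), fun hyX => hadj.2.2 (Or.inr hyX)⟩
    exact hX (c.transfer _ hedges) (hc.transfer hedges)

/-- An antler together with a minimum FVS of the rest yields a minimum FVS of `G`. -/
lemma antler_min [Fintype V] {G : SimpleGraph V} {C F : Set V} (h : IsAntler G C F)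
    {S' : Set V} (hS' : IsMinFVS (graphRestrict G (C ∪ F)ᶜ) S') :
    IsMinFVS G (C ∪ S') := by
  refine ⟨antler_glue h.1 hS'.1, ?_⟩
  intro Y hY
  have h1 : C.ncard ≤ (Y ∩ (C ∪ F)).ncard :=
    le_trans h.2 (fvs_le (isFVS_restrict hY (C ∪ F)))
  have h2 : S'.ncard ≤ (Y ∩ (C ∪ F)ᶜ).ncard := by
    rw [minFVS_ncard hS']
    exact fvs_le (isFVS_restrict hY (C ∪ F)ᶜ)
  calc (C ∪ S').ncard ≤ C.ncard + S'.ncard := Set.ncard_union_le _ _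
    _ ≤ (Y ∩ (C ∪ F)).ncard + (Y ∩ (C ∪ F)ᶜ).ncard := add_le_add h1 h2
    _ = Y.ncard := by
        rw [← Set.diff_eq]
        exact Set.ncard_inter_add_ncard_diff_eq_ncard Y (C ∪ F) Y.toFinite

lemma seq_union_succ {ℓ : ℕ} (C F : Fin (ℓ + 1) → Set V) (i : Fin ℓ) :
    (⋃ j : Fin (ℓ + 1), ⋃ (_ : j < i.succ), (C j ∪ F j)) =
      (C 0 ∪ F 0) ∪ ⋃ j : Fin ℓ, ⋃ (_ : j < i), (C j.succ ∪ F j.succ) := by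
  ext x
  simp only [Set.mem_iUnion, Set.mem_union, Set.mem_iUnion]
  constructor
  · rintro ⟨j, hj, hx⟩
    rcases Fin.eq_zero_or_eq_succ j with rfl | ⟨k, rfl⟩
    · left; exact hx
    · right
      refine ⟨k, ?_, hx⟩
      simpa [Fin.succ_lt_succ_iff] using hj
  · rintro (hx | ⟨k, hk, hx⟩)
    · exact ⟨0, by simp [Fin.pos_iff_ne_zero], hx⟩
    · exact ⟨k.succ, by simpa [Fin.succ_lt_succ_iff] using hk, hx⟩

lemma seq_main [Fintype V] :
    ∀ (ℓ : ℕ) (G : SimpleGraph V) (z : ℕ) (C F : Fin ℓ → Set V),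
      IsAntlerSeq G z ℓ C F →
      ∃ S : Set V, IsMinFVS G S ∧ (⋃ i, C i) ⊆ S ∧ Disjoint S (⋃ i, F i) := by
  intro ℓ
  induction ℓ with
  | zero =>
    intro G z C F _
    obtain ⟨S, hS⟩ := exists_minFVS G
    exact ⟨S, hS, by simp, by simp⟩
  | succ ℓ ih =>
    intro G z C F hseq
    obtain ⟨hCC, hFF, hCF, hant⟩ := hseq
    -- the first antler is an antler in G itself
    have h0 : IsZAntler G z (C 0) (F 0) := by
      have := hant 0
      have hempty : (⋃ j : Fin (ℓ + 1), ⋃ (_ : j < (0 : Fin (ℓ + 1))), (C j ∪ F j)) = ∅ := by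
        simp
      rwa [hempty, Set.compl_empty, graphRestrict_univ] at this
    set G' := graphRestrict G (C 0 ∪ F 0)ᶜ with hG'def
    -- the shifted sequence is an antler sequence in G'
    have hseq' : IsAntlerSeq G' z ℓ (fun i => C i.succ) (fun i => F i.succ) := by
      refine ⟨fun i j hij => hCC _ _ (fun hh => hij (Fin.succ_injective _ hh)),
        fun i j hij => hFF _ _ (fun hh => hij (Fin.succ_injective _ hh)),
        fun i j => hCF _ _, ?_⟩
      intro i
      have := hant i.succ
      have hgr : graphRestrict G' (⋃ j : Fin ℓ, ⋃ (_ : j < i), (C j.succ ∪ F j.succ))ᶜ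
          = graphRestrict G (⋃ j : Fin (ℓ + 1), ⋃ (_ : j < i.succ), (C j ∪ F j))ᶜ := by
        rw [hG'def, graphRestrict_graphRestrict, ← Set.compl_union, seq_union_succ]
      rwa [← hgr] at this
    obtain ⟨S', hS'min, hS'C, hS'F⟩ := ih G' z _ _ hseq'
    -- shrink S' to avoid C 0 ∪ F 0
    set S'' := S' ∩ (C 0 ∪ F 0)ᶜ with hS''def
    have hS''min : IsMinFVS G' S'' := by
      refine ⟨isFVS_inter hS'min.1, fun Y hY => le_trans ?_ (hS'min.2 Y hY)⟩
      exact Set.ncard_le_ncard Set.inter_subset_left S'.toFinite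
    have hS''C : (⋃ i : Fin ℓ, C i.succ) ⊆ S'' := by
      intro x hx
      obtain ⟨i, hi⟩ := Set.mem_iUnion.mp hx
      refine ⟨hS'C (Set.mem_iUnion.mpr ⟨i, hi⟩), ?_⟩
      rintro (hc | hf)
      · exact (hCC i.succ 0 (Fin.succ_ne_zero i)).le_bot ⟨hi, hc⟩
      · exact (hCF i.succ 0).le_bot ⟨hi, hf⟩
    refine ⟨C 0 ∪ S'', antler_min h0.1 hS''min, ?_, ?_⟩
    · intro x hx
      obtain ⟨i, hi⟩ := Set.mem_iUnion.mp hx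
      rcases Fin.eq_zero_or_eq_succ i with rfl | ⟨k, rfl⟩
      · exact Or.inl hi
      · exact Or.inr (hS''C (Set.mem_iUnion.mpr ⟨k, hi⟩))
    · rw [Set.disjoint_union_left]
      constructor
      · exact Set.disjoint_iUnion_right.mpr fun i => hCF 0 i
      · refine Set.disjoint_iUnion_right.mpr fun i => ?_
        rcases Fin.eq_zero_or_eq_succ i with rfl | ⟨k, rfl⟩
        · exact Set.disjoint_left.mpr fun x hx hf => hx.2 (Or.inr hf)
        · exact Set.disjoint_left.mpr fun x hx hf =>
            (Set.disjoint_right.mp hS'F (Set.mem_iUnion.mpr ⟨k, hf⟩)) hx.1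

theorem stmt15 [Fintype V] (G : SimpleGraph V) (z ℓ : ℕ) (C F : Fin ℓ → Set V)
    (h : IsAntlerSeq G z ℓ C F) :
    ∃ S : Set V, IsMinFVS G S ∧ (⋃ i, C i) ⊆ S ∧ Disjoint S (⋃ i, F i) := by
  exact seq_main ℓ G z C F h
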